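/- Let μ, ν be probability measures on 𝕋² with ‖μ−ν‖_{TV} ≤ 1 and suppose ν has an L^∞ density. Then there is a universal constant C > 0 such that Var(μ) ≥ C⁻¹ ‖ν‖_{L^∞(𝕋²)}⁻¹. -/

import Mathlib

open MeasureTheory
open scoped ENNReal

noncomputable section

instance : Fact ((0:ℝ) < 1) := ⟨one_pos⟩

/-- The two-dimensional torus. -/
abbrev T2 : Type := AddCircle (1:ℝ) × AddCircle (1:ℝ)

/-- `Var(μ) := inf_{a ∈ 𝕋²} ∫ |x − a|² dμ(x)`. -/
def torusVar (μ : Measure T2) : ℝ := ⨅ a : T2, ∫ x, dist x a ^ 2 ∂μ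

lemma T2.volume_univ : (volume : Measure T2) Set.univ = 1 := by
  rw [← Set.univ_prod_univ, Measure.volume_eq_prod, Measure.prod_prod,
    AddCircle.measure_univ]
  simp

lemma T2.volume_closedBall (a : T2) (r : ℝ) (hr : 0 ≤ r) :
    ((volume : Measure T2) (Metric.closedBall a r)).toReal ≤ 4 * r ^ 2 := by
  obtain ⟨a₁, a₂⟩ := a
  rw [← closedBall_prod_same, Measure.volume_eq_prod, Measure.prod_prod,
    AddCircle.volume_closedBall, AddCircle.volume_closedBall,
    ENNReal.toReal_mul, ENNReal.toReal_ofReal (le_min one_pos.le (by linarith))]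
  have h1 : min (1:ℝ) (2*r) ≤ 2*r := min_le_right _ _
  have h0 : (0:ℝ) ≤ min (1:ℝ) (2*r) := le_min one_pos.le (by linarith)
  nlinarith

lemma setLIntegral_le_essSup_mul' (g : T2 → ℝ≥0∞) (A : Set T2) :
    ∫⁻ x in A, g x ∂volume ≤ essSup g volume * volume A := by
  calc ∫⁻ x in A, g x ∂volume ≤ ∫⁻ _ in A, essSup g volume ∂volume := by
        refine lintegral_mono_ae (ae_restrict_of_ae ?_)
        exact ENNReal.ae_le_essSup g
    _ = essSup g volume * volume A := by
        rw [setLIntegral_const]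

/-- If `μ, ν` are probability measures on `𝕋²` with `‖μ − ν‖_{TV} ≤ 1` and `ν` has
an `L^∞` density, then `Var(μ) ≥ C⁻¹ ‖ν‖_{L^∞}⁻¹` for a universal constant `C > 0`. -/
theorem variance_lower_bound_of_TV_close :
    ∃ C : ℝ, 0 < C ∧
      ∀ (μ ν : Measure T2) [IsProbabilityMeasure μ] [IsProbabilityMeasure ν]
        (g : T2 → ℝ≥0∞),
        ν = volume.withDensity g →
        essSup g volume ≠ ⊤ →
        (μ.toSignedMeasure - ν.toSignedMeasure).totalVariation Set.univ ≤ 1 →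
        torusVar μ ≥ C⁻¹ * ((essSup g volume).toReal)⁻¹ := by
  refine ⟨64, by norm_num, ?_⟩
  intro μ ν _ _ g hν htop hTV
  set M : ℝ := (essSup g volume).toReal with hMdef
  -- M ≥ 1
  have hν_le : ∀ A : Set T2, MeasurableSet A → ν A ≤ essSup g volume * volume A := by
    intro A hA
    rw [hν, withDensity_apply _ hA]
    exact setLIntegral_le_essSup_mul' g A
  have hM1 : (1 : ℝ) ≤ M := by
    have h1 : (1 : ℝ≥0∞) ≤ essSup g volume := by
      have := hν_le Set.univ MeasurableSet.univ
      rw [measure_univ, T2.volume_univ, mul_one] at this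
      exact this
    calc (1:ℝ) = (1 : ℝ≥0∞).toReal := by simp
      _ ≤ M := ENNReal.toReal_mono htop h1
  have hM0 : (0 : ℝ) < M := lt_of_lt_of_le one_pos hM1
  -- Jordan decomposition bound: μ A ≤ ν A + 1/2 (in toReal)
  set s := μ.toSignedMeasure - ν.toSignedMeasure with hs
  set P := s.toJordanDecomposition.posPart with hP
  set N := s.toJordanDecomposition.negPart with hNdef
  have hsapp : ∀ A : Set T2, MeasurableSet A → s A = (P A).toReal - (N A).toReal := by
    intro A hA
    conv_lhs => rw [← s.toSignedMeasure_toJordanDecomposition]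
    rw [JordanDecomposition.toSignedMeasure, VectorMeasure.sub_apply,
      Measure.toSignedMeasure_apply_measurable hA, Measure.toSignedMeasure_apply_measurable hA]
    rfl
  have hsuniv : s Set.univ = 0 := by
    rw [hs, Measure.toSignedMeasure_sub_apply MeasurableSet.univ]
    simp
  have hPN : (P Set.univ).toReal = (N Set.univ).toReal := by
    have := hsapp Set.univ MeasurableSet.univ
    rw [hsuniv] at this
    linarith
  have hsum : (P Set.univ).toReal + (N Set.univ).toReal ≤ 1 := by
    have h : P Set.univ + N Set.univ ≤ 1 := by
      have := hTV
      rwa [SignedMeasure.totalVariation, Measure.add_apply] at this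
    calc (P Set.univ).toReal + (N Set.univ).toReal
        = (P Set.univ + N Set.univ).toReal := by
          rw [ENNReal.toReal_add (measure_ne_top _ _) (measure_ne_top _ _)]
      _ ≤ (1 : ℝ≥0∞).toReal := ENNReal.toReal_mono ENNReal.one_ne_top h
      _ = 1 := by simp
  have hPhalf : (P Set.univ).toReal ≤ 1/2 := by linarith
  have hμν : ∀ A : Set T2, MeasurableSet A →
      (μ A).toReal ≤ (ν A).toReal + 1/2 := by
    intro A hA
    have h1 : s A = (μ A).toReal - (ν A).toReal :=
      Measure.toSignedMeasure_sub_apply hA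
    have h2 := hsapp A hA
    have h3 : (P A).toReal ≤ (P Set.univ).toReal :=
      ENNReal.toReal_mono (measure_ne_top _ _) (measure_mono (Set.subset_univ A))
    have h4 : (0:ℝ) ≤ (N A).toReal := ENNReal.toReal_nonneg
    linarith [h1 ▸ h2]
  -- the radius
  set r : ℝ := Real.sqrt (1 / (16 * M)) with hrdef
  have hr0 : 0 ≤ r := Real.sqrt_nonneg _
  have hr2 : r ^ 2 = 1 / (16 * M) := Real.sq_sqrt (by positivity)
  -- bound for each center a
  have key : ∀ a : T2, (64:ℝ)⁻¹ * M⁻¹ ≤ ∫ x, dist x a ^ 2 ∂μ := by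
    intro a
    have hB : MeasurableSet (Metric.closedBall a r) := measurableSet_closedBall
    -- ν ball small
    have hνB : (ν (Metric.closedBall a r)).toReal ≤ 1/4 := by
      have h1 : ν (Metric.closedBall a r) ≤ essSup g volume * volume (Metric.closedBall a r) :=
        hν_le _ hB
      have h2 : (ν (Metric.closedBall a r)).toReal
          ≤ M * (volume (Metric.closedBall a r)).toReal := by
        calc (ν (Metric.closedBall a r)).toReal
            ≤ (essSup g volume * volume (Metric.closedBall a r)).toReal :=
              ENNReal.toReal_mono (ENNReal.mul_ne_top htop (measure_ne_top _ _)) h1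
          _ = M * (volume (Metric.closedBall a r)).toReal := by rw [ENNReal.toReal_mul]
      have h3 := T2.volume_closedBall a r hr0
      have h4 : M * (volume (Metric.closedBall a r)).toReal ≤ M * (4 * r ^ 2) :=
        mul_le_mul_of_nonneg_left h3 hM0.le
      have h5 : M * (4 * r ^ 2) = 1/4 := by
        rw [hr2]; field_simp; ring
      linarith
    have hμB : (μ (Metric.closedBall a r)).toReal ≤ 3/4 := by
      have := hμν _ hB
      linarith
    -- complement has mass ≥ 1/4
    have hcompl : (1:ℝ)/4 ≤ (μ (Metric.closedBall a r)ᶜ).toReal := by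
      have h1 : μ (Metric.closedBall a r)ᶜ = 1 - μ (Metric.closedBall a r) :=
        prob_compl_eq_one_sub hB
      have h2 : (μ (Metric.closedBall a r)ᶜ).toReal
          = 1 - (μ (Metric.closedBall a r)).toReal := by
        rw [h1, ENNReal.toReal_sub_of_le prob_le_one ENNReal.one_ne_top, ENNReal.toReal_one]
      linarith
    -- integrability
    have hcont : Continuous fun x : T2 => dist x a ^ 2 :=
      (continuous_id.dist continuous_const).pow 2
    have hfi : Integrable (fun x : T2 => dist x a ^ 2) μ :=
      hcont.integrable_of_hasCompactSupport (HasCompactSupport.of_compactSpace _)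
    have hnn : 0 ≤ᵐ[μ] fun x : T2 => dist x a ^ 2 :=
      Filter.Eventually.of_forall fun x => by positivity
    have hlow : ∀ x ∈ (Metric.closedBall a r)ᶜ, r ^ 2 ≤ dist x a ^ 2 := by
      intro x hx
      have : r < dist x a := by
        simpa [Metric.mem_closedBall, not_le] using hx
      exact pow_le_pow_left₀ hr0 this.le 2
    have h1 : r ^ 2 * (μ (Metric.closedBall a r)ᶜ).toReal
        ≤ ∫ x in (Metric.closedBall a r)ᶜ, dist x a ^ 2 ∂μ :=
      by
        have := setIntegral_ge_of_const_le_real hB.compl (measure_ne_top _ _) hlow hfi.integrableOn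
        simp only [smul_eq_mul, Measure.real] at this
        linarith [mul_comm (r ^ 2) ((μ (Metric.closedBall a r)ᶜ).toReal)]
    have h2 : ∫ x in (Metric.closedBall a r)ᶜ, dist x a ^ 2 ∂μ ≤ ∫ x, dist x a ^ 2 ∂μ :=
      setIntegral_le_integral hfi hnn
    have h3 : r ^ 2 * (1/4 : ℝ) ≤ r ^ 2 * (μ (Metric.closedBall a r)ᶜ).toReal :=
      mul_le_mul_of_nonneg_left hcompl (by positivity)
    have h4 : (64:ℝ)⁻¹ * M⁻¹ = r ^ 2 * (1/4) := by
      rw [hr2]; field_simp; ring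
    linarith
  have : (64:ℝ)⁻¹ * M⁻¹ ≤ torusVar μ := le_ciInf key
  exact this

end
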